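/- Let (A, m) be a Noetherian local ring and I an ideal of A. Then the Krull dimension of the amalgamated duplication A ⋈ I equals the Krull dimension of A, and depth A ⋈ I = min(depth A, depth I). -/

import Mathlib

open IsLocalRing

variable {A : Type} [CommRing A]

/-- The amalgamated duplication `A ⋈ I = {(a, a + i) : a ∈ A, i ∈ I}` of a ring `A` along an
ideal `I`, as a subring of `A × A`. -/
def AmalgDup (I : Ideal A) : Subring (A × A) where
  carrier := {x | ∃ a : A, ∃ i ∈ I, x = (a, a + i)}
  zero_mem' := ⟨0, 0, I.zero_mem, by simp; rfl⟩
  one_mem' := ⟨1, 0, I.zero_mem, by simp; rfl⟩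
  add_mem' := by
    rintro x y ⟨a, i, hi, rfl⟩ ⟨b, k, hk, rfl⟩
    exact ⟨a + b, i + k, I.add_mem hi hk, by
      simp only [Prod.mk_add_mk, Prod.mk.injEq]
      exact ⟨trivial, by ring⟩⟩
  neg_mem' := by
    rintro x ⟨a, i, hi, rfl⟩
    exact ⟨-a, -i, I.neg_mem hi, by
      simp only [Prod.neg_mk, Prod.mk.injEq]
      exact ⟨trivial, by ring⟩⟩
  mul_mem' := by
    rintro x y ⟨a, i, hi, rfl⟩ ⟨b, k, hk, rfl⟩
    exact ⟨a * b, a * k + i * b + i * k,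
      I.add_mem (I.add_mem (I.mul_mem_left _ hk) (I.mul_mem_right _ hi)) (I.mul_mem_right _ hi),
      by
      simp only [Prod.mk_mul_mk, Prod.mk.injEq]
      exact ⟨trivial, by ring⟩⟩

/-- The canonical ring homomorphism `A → A ⋈ I`, `a ↦ (a, a)`. -/
def AmalgDup.incl (I : Ideal A) : A →+* AmalgDup I where
  toFun a := ⟨(a, a), a, 0, I.zero_mem, by simp⟩
  map_one' := Subtype.ext (by simp)
  map_mul' x y := Subtype.ext (by simp [Prod.mk_mul_mk])
  map_zero' := Subtype.ext (by simp)
  map_add' x y := Subtype.ext (by simp [Prod.mk_add_mk])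

/-- `A ⋈ I` as an `A`-module. -/
instance AmalgDup.moduleA (I : Ideal A) : Module A (AmalgDup I) :=
  Module.compHom _ (AmalgDup.incl I)

noncomputable def lcDepth (R M : Type) [CommRing R] [IsLocalRing R]
    [AddCommGroup M] [Module R M] : ℕ∞ :=
  sInf {n : ℕ∞ | ∃ i : ℕ, n = (i : ℕ∞) ∧
    Nontrivial ((localCohomology (maximalIdeal R) i).obj (ModuleCat.of R M))}


open CategoryTheory Limits Polynomial

section ExtAdditive

universe uR uC vC
variable {R : Type uR} [CommRing R] {C : Type uC} [Category.{vC} C] [Abelian C] [Linear R C]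
  [EnoughProjectives C]

set_option linter.unusedSectionVars false in
lemma AmalgDupAux.rightOp_linearYoneda_add {Y Z : C} (u v : Y ⟶ Z) :
    NatTrans.rightOp ((linearYoneda R C).map (u + v)) =
    NatTrans.rightOp ((linearYoneda R C).map u) + NatTrans.rightOp ((linearYoneda R C).map v) := by
  ext x
  dsimp [NatTrans.rightOp]
  rw [← op_add]
  congr 1
  ext h
  exact Preadditive.comp_add _ _ _ h u v

lemma AmalgDupAux.mapHomologicalComplex_add {V W : Type*} [Category V] [Category W]
    [Preadditive V] [Preadditive W] {F G : V ⥤ W} [F.Additive] [G.Additive] (α β : F ⟶ G)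
    {ι : Type*} (c : ComplexShape ι) :
    NatTrans.mapHomologicalComplex (α + β) c =
      NatTrans.mapHomologicalComplex α c + NatTrans.mapHomologicalComplex β c := by
  ext K i
  simp
  rfl

lemma AmalgDupAux.leftDerived_add {V W : Type*} [Category V] [Category W] [Abelian V]
    [Abelian W] [EnoughProjectives V] {F G : V ⥤ W} [F.Additive] [G.Additive] (α β : F ⟶ G)
    (n : ℕ) :
    NatTrans.leftDerived (α + β) n = NatTrans.leftDerived α n + NatTrans.leftDerived β n := by
  ext K
  dsimp [NatTrans.leftDerived, NatTrans.leftDerivedToHomotopyCategory]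
  rw [show NatTrans.mapHomotopyCategory (α + β) (ComplexShape.down ℕ) = NatTrans.mapHomotopyCategory α (ComplexShape.down ℕ) + NatTrans.mapHomotopyCategory β (ComplexShape.down ℕ) by
    ext X
    obtain ⟨X⟩ := X
    simp [NatTrans.mapHomotopyCategory, AmalgDupAux.mapHomologicalComplex_add]
    rfl]
  exact (HomotopyCategory.homologyFunctor W (ComplexShape.down ℕ) n).map_add

instance AmalgDupAux.extObjAdditive (n : ℕ) (X : Cᵒᵖ) : ((Ext R C n).obj X).Additive := by
  constructor
  intro Y Z f g
  show (NatTrans.leftOp (NatTrans.leftDerived (NatTrans.rightOp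
      ((linearYoneda R C).map (f + g))) n)).app X =
    (NatTrans.leftOp (NatTrans.leftDerived (NatTrans.rightOp
      ((linearYoneda R C).map f)) n)).app X +
    (NatTrans.leftOp (NatTrans.leftDerived (NatTrans.rightOp
      ((linearYoneda R C).map g)) n)).app X
  rw [AmalgDupAux.rightOp_linearYoneda_add, AmalgDupAux.leftDerived_add]
  simp [NatTrans.leftOp, unop_add]

end ExtAdditive

universe w u' v' uu u4
lemma AmalgDupAux.colimit_additive {J : Type w} [SmallCategory J] {C : Type uu}
    [Category.{v'} C] {D : Type u'} [Category.{u4} D] [Preadditive C] [Preadditive D]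
    [HasColimitsOfShape J D]
    (H : J ⥤ C ⥤ D) [∀ j, (H.obj j).Additive] [HasColimit H] : (colimit H).Additive := by
  constructor
  intro X Y f g
  apply (isColimitOfPreserves ((evaluation C D).obj X) (colimit.isColimit H)).hom_ext
  intro j
  have h := fun (f : X ⟶ Y) => (colimit.ι H j).naturality f
  dsimp at h ⊢
  rw [← h, (H.obj j).map_add, Preadditive.add_comp, h, h, ← Preadditive.comp_add]

instance AmalgDupAux.lcAdditive {A : Type} [CommRing A] (J : Ideal A) (i : ℕ) :
    (localCohomology J i).Additive := by
  show (colimit (localCohomology.diagram (localCohomology.idealPowersDiagram J) i)).Additive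
  haveI : ∀ j,
      ((localCohomology.diagram (localCohomology.idealPowersDiagram J) i).obj j).Additive :=
    fun j => by dsimp [localCohomology.diagram]; infer_instance
  exact AmalgDupAux.colimit_additive _

lemma AmalgDupAux.nontrivial_iff_of_iso {A : Type} [CommRing A] {X Y : ModuleCat A} (e : X ≅ Y) :
    Nontrivial X ↔ Nontrivial Y :=
  ⟨fun h => letI := h; e.toLinearEquiv.symm.toEquiv.nontrivial,
   fun h => letI := h; e.toLinearEquiv.toEquiv.nontrivial⟩

lemma AmalgDupAux.nontrivial_obj_prod_iff {A : Type} [CommRing A]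
    (F : ModuleCat A ⥤ ModuleCat A) [F.Additive]
    (M N : Type) [AddCommGroup M] [Module A M] [AddCommGroup N] [Module A N] :
    Nontrivial (F.obj (ModuleCat.of A (M × N))) ↔
      Nontrivial (F.obj (ModuleCat.of A M)) ∨ Nontrivial (F.obj (ModuleCat.of A N)) := by
  set i1 : ModuleCat.of A M ⟶ ModuleCat.of A (M × N) := ModuleCat.ofHom (LinearMap.inl A M N)
  set i2 : ModuleCat.of A N ⟶ ModuleCat.of A (M × N) := ModuleCat.ofHom (LinearMap.inr A M N)
  set p1 : ModuleCat.of A (M × N) ⟶ ModuleCat.of A M := ModuleCat.ofHom (LinearMap.fst A M N)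
  set p2 : ModuleCat.of A (M × N) ⟶ ModuleCat.of A N := ModuleCat.ofHom (LinearMap.snd A M N)
  have h1 : i1 ≫ p1 = 𝟙 _ := by ext x; rfl
  have h2 : i2 ≫ p2 = 𝟙 _ := by ext x; rfl
  have hsum : p1 ≫ i1 + p2 ≫ i2 = 𝟙 (ModuleCat.of A (M × N)) := by
    apply ModuleCat.hom_ext; apply LinearMap.ext; intro x
    show ((x.1, 0) : M × N) + (0, x.2) = x
    rw [Prod.mk_add_mk, add_zero, zero_add]
  constructor
  · intro h
    by_contra hc
    push_neg at hc
    obtain ⟨hM, hN⟩ := hc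
    have key : ∀ x : F.obj (ModuleCat.of A (M × N)), x = 0 := by
      intro x
      have : F.map (𝟙 _) x = x := by rw [F.map_id]; rfl
      rw [← this, ← hsum, F.map_add, F.map_comp, F.map_comp]
      have e1 : (F.map p1 ≫ F.map i1) x = 0 := by
        show F.map i1 (F.map p1 x) = 0
        rw [Subsingleton.elim (F.map p1 x) 0, map_zero]
      have e2 : (F.map p2 ≫ F.map i2) x = 0 := by
        show F.map i2 (F.map p2 x) = 0
        rw [Subsingleton.elim (F.map p2 x) 0, map_zero]
      show (F.map p1 ≫ F.map i1) x + (F.map p2 ≫ F.map i2) x = 0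
      rw [e1, e2, add_zero]
    obtain ⟨x, y, hxy⟩ := h
    exact hxy ((key x).trans (key y).symm)
  · rintro (⟨x, y, hxy⟩ | ⟨x, y, hxy⟩)
    · refine ⟨F.map i1 x, F.map i1 y, fun h => hxy ?_⟩
      have := congrArg (F.map p1) h
      have h' : ∀ z, F.map p1 (F.map i1 z) = z := by
        intro z
        have : (F.map i1 ≫ F.map p1) z = z := by
          rw [← F.map_comp, h1, F.map_id]; rfl
        exact this
      rwa [h' x, h' y] at this
    · refine ⟨F.map i2 x, F.map i2 y, fun h => hxy ?_⟩
      have := congrArg (F.map p2) h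
      have h' : ∀ z, F.map p2 (F.map i2 z) = z := by
        intro z
        have : (F.map i2 ≫ F.map p2) z = z := by
          rw [← F.map_comp, h2, F.map_id]; rfl
        exact this
      rwa [h' x, h' y] at this

lemma AmalgDup.sub_mem (I : Ideal A) (x : AmalgDup I) : (x : A × A).2 - (x : A × A).1 ∈ I := by
  obtain ⟨a, i, hi, hx⟩ := x.2
  simp [hx, hi]

/-- `A ⋈ I ≃ A × I` as `A`-modules. -/
def AmalgDup.linearEquiv (I : Ideal A) : AmalgDup I ≃ₗ[A] A × I where
  toFun x := (x.1.1, ⟨x.1.2 - x.1.1, AmalgDup.sub_mem I x⟩)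
  invFun p := ⟨(p.1, p.1 + p.2.1), p.1, p.2.1, p.2.2, rfl⟩
  left_inv x := by
    apply Subtype.ext
    simp
  right_inv p := by
    apply Prod.ext
    · rfl
    · apply Subtype.ext
      simp
  map_add' x y := by
    apply Prod.ext
    · rfl
    · apply Subtype.ext
      show (x.1.2 + y.1.2) - (x.1.1 + y.1.1) = (x.1.2 - x.1.1) + (y.1.2 - y.1.1)
      ring
  map_smul' a x := by
    apply Prod.ext
    · rfl
    · apply Subtype.ext
      show a * x.1.2 - a * x.1.1 = a * (x.1.2 - x.1.1)
      ring

lemma AmalgDup.dim_eq (I : Ideal A) : ringKrullDim (AmalgDup I) = ringKrullDim A := by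
  refine le_antisymm ?_ (ringKrullDim_le_of_surjective
    ((RingHom.fst A A).comp (AmalgDup I).subtype) (fun a => ⟨AmalgDup.incl I a, rfl⟩))
  letI : Algebra A (AmalgDup I) := (AmalgDup.incl I).toAlgebra
  have hint : ∀ x : AmalgDup I, IsIntegral A x := by
    intro x
    obtain ⟨a, i, hi, hx⟩ := x.2
    refine ⟨(X - C a) * (X - C (a + i)), (monic_X_sub_C a).mul (monic_X_sub_C (a + i)), ?_⟩
    rw [eval₂_mul, eval₂_sub, eval₂_sub, eval₂_X, eval₂_C, eval₂_C]
    apply Subtype.ext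
    show ((x : A × A) - (a, a)) * ((x : A × A) - (a + i, a + i)) = 0
    rw [hx]
    apply Prod.ext <;> simp
  refine Order.krullDim_le_of_strictMono
    (fun P => ⟨Ideal.comap (algebraMap A (AmalgDup I)) P.asIdeal, inferInstance⟩) ?_
  intro P Q hPQ
  rw [← PrimeSpectrum.asIdeal_lt_asIdeal]
  obtain ⟨x, hxQ, hxP⟩ := SetLike.exists_of_lt ((PrimeSpectrum.asIdeal_lt_asIdeal P Q).mpr hPQ)
  exact Ideal.comap_lt_comap_of_integral_mem_sdiff hPQ.le ⟨hxQ, hxP⟩ (hint x)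


theorem amalgDup_ringKrullDim_and_lcDepth (I : Ideal A)
    [IsNoetherianRing A] [IsLocalRing A] :
    ringKrullDim (AmalgDup I) = ringKrullDim A ∧
    lcDepth A (AmalgDup I) = min (lcDepth A A) (lcDepth A I) := by
  constructor
  · exact AmalgDup.dim_eq I
  · have keyiff : ∀ i : ℕ,
        Nontrivial ((localCohomology (maximalIdeal A) i).obj (ModuleCat.of A (AmalgDup I))) ↔
          Nontrivial ((localCohomology (maximalIdeal A) i).obj (ModuleCat.of A A)) ∨
          Nontrivial ((localCohomology (maximalIdeal A) i).obj (ModuleCat.of A I)) := by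
      intro i
      exact (AmalgDupAux.nontrivial_iff_of_iso
        ((localCohomology (maximalIdeal A) i).mapIso
          (AmalgDup.linearEquiv I).toModuleIso)).trans
        (AmalgDupAux.nontrivial_obj_prod_iff (localCohomology (maximalIdeal A) i) A I)
    have hset : {n : ℕ∞ | ∃ i : ℕ, n = (i : ℕ∞) ∧
        Nontrivial ((localCohomology (maximalIdeal A) i).obj (ModuleCat.of A (AmalgDup I)))} =
        {n : ℕ∞ | ∃ i : ℕ, n = (i : ℕ∞) ∧
          Nontrivial ((localCohomology (maximalIdeal A) i).obj (ModuleCat.of A A))} ∪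
        {n : ℕ∞ | ∃ i : ℕ, n = (i : ℕ∞) ∧
          Nontrivial ((localCohomology (maximalIdeal A) i).obj (ModuleCat.of A I))} := by
      ext n
      simp only [Set.mem_setOf_eq, Set.mem_union]
      constructor
      · rintro ⟨i, rfl, h⟩
        rcases (keyiff i).mp h with h' | h'
        · exact Or.inl ⟨i, rfl, h'⟩
        · exact Or.inr ⟨i, rfl, h'⟩
      · rintro (⟨i, rfl, h⟩ | ⟨i, rfl, h⟩)
        · exact ⟨i, rfl, (keyiff i).mpr (Or.inl h)⟩
        · exact ⟨i, rfl, (keyiff i).mpr (Or.inr h)⟩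
    show sInf _ = min (sInf _) (sInf _)
    rw [hset, sInf_union]
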